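/- Let f: Δ^{n_1} ∨ ... ∨ Δ^{n_k} → Δ^{m_1} ∨ ... ∨ Δ^{m_k} be a morphism of necklaces of the form f = f_1 ∨ ... ∨ f_k in which exactly one f_p is a simplicial codegeneracy Δ^{n_p} → Δ^{n_p - 1} and all other f_i are identities (a type (ii) morphism). Then the induced map P₁(f): {0,1}^N → {0,1}^{N-1} (N = |V_T - J_T|) is either a cubical co-connection functor (s_1,...,s_N) ↦ (s_1,...,s_{j-1}, max(s_j, s_{j+1}), s_{j+2},...,s_N), which happens exactly when the collapsed vertex maps to a non-joint of the target, or a cubical codegeneracy functor (s_1,...,s_N) ↦ (s_1,...,s_{j-1}, s_{j+1},...,s_N), which happens exactly when the collapsed vertex maps to a joint. -/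

import Mathlib

/-! Combinatorial model of necklaces (wedges of simplices glued end to end),
encoded by the totally ordered vertex set `Fin (m+1)` together with the
subset `J` of joints (containing the first and last vertex); beads are the
intervals between consecutive joints. -/

structure Necklace where
  m : ℕ
  J : Finset (Fin (m + 1))
  zero_mem : 0 ∈ J
  last_mem : Fin.last m ∈ J

namespace Necklace

/-- Two vertices lie in a common bead. -/
def SameBead (T : Necklace) (v w : Fin (T.m + 1)) : Prop :=
  ∃ a b : Fin (T.m + 1), a ∈ T.J ∧ b ∈ T.J ∧ (∀ c ∈ T.J, c ≤ a ∨ b ≤ c) ∧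
    a ≤ v ∧ v ≤ b ∧ a ≤ w ∧ w ≤ b

/-- A morphism of necklaces: a vertex-level monotone map preserving the first
and last vertices and mapping each bead into a single bead.  (Such data is
equivalent to a simplicial map of necklaces preserving endpoints.) -/
structure Hom (T T' : Necklace) where
  f : Fin (T.m + 1) → Fin (T'.m + 1)
  mono : Monotone f
  map_zero : f 0 = 0
  map_last : f (Fin.last T.m) = Fin.last T'.m
  bead : ∀ v w, SameBead T v w → SameBead T' (f v) (f w)

/-- Identity morphism. -/
def Hom.id (T : Necklace) : Hom T T :=
  ⟨_root_.id, monotone_id, rfl, rfl, fun _ _ h => h⟩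

/-- Composition of morphisms of necklaces. -/
def Hom.comp {T T' T'' : Necklace} (g : Hom T' T'') (h : Hom T T') : Hom T T'' :=
  ⟨g.f ∘ h.f, g.mono.comp h.mono,
    by simp [Function.comp, h.map_zero, g.map_zero],
    by simp [Function.comp, h.map_last, g.map_last],
    fun v w hb => g.bead _ _ (h.bead v w hb)⟩

/-- The set of non-joint vertices. -/
def nonJoints (T : Necklace) : Finset (Fin (T.m + 1)) := Finset.univ \ T.J

/-- The number of non-joint vertices, `N = |V_T - J_T|`. -/
def N (T : Necklace) : ℕ := T.nonJoints.card

/-- Enumeration of the non-joint vertices in increasing order. -/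
noncomputable def enum (T : Necklace) : Fin T.N ≃o {x // x ∈ T.nonJoints} :=
  T.nonJoints.orderIsoOfFin rfl

/-- The subset of vertices encoded by a cube-vertex `s : Fin (N T) → Bool`
(the joints together with the non-joints whose coordinate is `true`). -/
noncomputable def subsetOf (T : Necklace) (s : Fin T.N → Bool) : Finset (Fin (T.m + 1)) :=
  T.J ∪ (Finset.univ.filter (fun i => s i = true)).image (fun i => (T.enum i : Fin (T.m + 1)))

/-- The functor `P₁(g) : {0,1}^{N T} → {0,1}^{N T'}` induced by a morphism of
necklaces, expressed on vertices of the cubes via indicator sequences. -/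
noncomputable def P1 {T T' : Necklace} (g : Hom T T') (s : Fin T.N → Bool) :
    Fin T'.N → Bool :=
  fun i' => decide ((T'.enum i' : Fin (T'.m + 1)) ∈ (T.subsetOf s).image g.f)

/-- Type (i) morphisms: injective with `|V' - J'| = |V - J| + 1`. -/
def TypeI {T T' : Necklace} (g : Hom T T') : Prop :=
  Function.Injective g.f ∧ T'.N = T.N + 1

/-- Type (ii) morphisms: a wedge of identities and exactly one simplicial
codegeneracy; vertex-theoretically, a surjection collapsing exactly one pair of
consecutive vertices, not both of which are joints, mapping joints bijectively
onto joints. -/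
def TypeII {T T' : Necklace} (g : Hom T T') : Prop :=
  Function.Surjective g.f ∧ Finset.image g.f T.J = T'.J ∧ Set.InjOn g.f (T.J : Set _) ∧
  ∃ v : Fin T.m, g.f v.castSucc = g.f v.succ ∧ ¬(v.castSucc ∈ T.J ∧ v.succ ∈ T.J) ∧
    ∀ a b, g.f a = g.f b → a = b ∨ ({a, b} : Finset _) = {v.castSucc, v.succ}

/-- Type (iii) morphisms: collapse of a `Δ¹` bead (both of whose endpoints are
joints) to a point, injective elsewhere. -/
def TypeIII {T T' : Necklace} (g : Hom T T') : Prop :=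
  Function.Surjective g.f ∧ Finset.image g.f T.J = T'.J ∧
  ∃ v : Fin T.m, g.f v.castSucc = g.f v.succ ∧ v.castSucc ∈ T.J ∧ v.succ ∈ T.J ∧
    ∀ a b, g.f a = g.f b → a = b ∨ ({a, b} : Finset _) = {v.castSucc, v.succ}

/-- `g` is an identity morphism of necklaces. -/
def IsIdentity {T T' : Necklace} (g : Hom T T') : Prop :=
  T = T' ∧ ∀ v, ((g.f v : ℕ) = (v : ℕ))

/-- Compositions of morphisms of types (i), (ii), (iii). -/
inductive IsGenComp : ∀ {T T' : Necklace}, Hom T T' → Prop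
  | of {T T'} (g : Hom T T') : TypeI g ∨ TypeII g ∨ TypeIII g → IsGenComp g
  | comp {T T' T''} (g : Hom T T') (g' : Hom T' T'') :
      IsGenComp g → IsGenComp g' → IsGenComp (g'.comp g)

/-- Compositions of `n` morphisms of type (i). -/
inductive IsCompI : ∀ {T T' : Necklace}, Hom T T' → ℕ → Prop
  | of {T T'} (g : Hom T T') : TypeI g → IsCompI g 1
  | comp {T T' T''} (g : Hom T T') (g' : Hom T' T'') {n n' : ℕ} :
      IsCompI g n → IsCompI g' n' → IsCompI (g'.comp g) (n + n')

/-- The standard simplex `Δᵖ` regarded as a necklace with one bead. -/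
def simplex (p : ℕ) : Necklace :=
  ⟨p, {0, Fin.last p}, by simp, by simp⟩

end Necklace

/-- The cubical co-connection map `{0,1}^{N+1} → {0,1}^N`,
`(s_1,…,s_{N+1}) ↦ (s_1,…,s_{j-1}, max(s_j,s_{j+1}), s_{j+2},…,s_{N+1})`. -/
def cubConn {N : ℕ} (j : Fin N) (s : Fin (N + 1) → Bool) (i : Fin N) : Bool :=
  if (i : ℕ) < (j : ℕ) then s i.castSucc
  else if (i : ℕ) = (j : ℕ) then (s i.castSucc || s i.succ)
  else s i.succ

/-- The cubical codegeneracy map `{0,1}^{N+1} → {0,1}^N` forgetting the `j`-th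
coordinate. -/
def cubDegen {N : ℕ} (j : Fin (N + 1)) (s : Fin (N + 1) → Bool) (i : Fin N) : Bool :=
  s (j.succAbove i)


lemma finset_pair_eq {α : Type*} [DecidableEq α] {a b c d : α}
    (h : ({a, b} : Finset α) = {c, d}) : (a = c ∧ b = d) ∨ (a = d ∧ b = c) := by
  have h' : ({a, b} : Set α) = {c, d} := by
    have := congrArg (fun s : Finset α => (s : Set α)) h
    simpa using this
  exact Set.pair_eq_pair_iff.mp h'

lemma collapse_formula {m m'' : ℕ} (f : Fin (m + 1) → Fin m'')
    (mono : Monotone f) (surj : Function.Surjective f)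
    (a₀ b₀ : Fin (m + 1)) (hab : (a₀ : ℕ) < (b₀ : ℕ)) (hfab : f a₀ = f b₀)
    (h2 : ∀ a b, f a = f b → a = b ∨ ({a, b} : Finset (Fin (m + 1))) = {a₀, b₀}) :
    (b₀ : ℕ) = (a₀ : ℕ) + 1 ∧
      ∀ x : Fin (m + 1), (f x : ℕ) = if (x : ℕ) ≤ (a₀ : ℕ) then (x : ℕ) else (x : ℕ) - 1 := by
  have hm'' : 0 < m'' := Nat.pos_of_ne_zero (fun h => absurd (f 0).isLt (by omega))
  have f0 : (f 0 : ℕ) = 0 := by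
    obtain ⟨z, hz⟩ := surj ⟨0, hm''⟩
    have h1 : f 0 ≤ f z := mono (Fin.zero_le z)
    rw [hz] at h1
    simpa using Nat.le_zero.mp h1
  have step : ∀ (k : ℕ) (hk' : k < m + 1) (hk : k + 1 < m + 1),
      (f ⟨k + 1, hk⟩ : ℕ) ≤ (f ⟨k, hk'⟩ : ℕ) + 1 := by
    intro k hk' hk
    by_contra hcon
    push_neg at hcon
    have hy : (f ⟨k, hk'⟩ : ℕ) + 1 < m'' := hcon.trans (f ⟨k + 1, hk⟩).isLt
    obtain ⟨z, hz⟩ := surj ⟨(f ⟨k, hk'⟩ : ℕ) + 1, hy⟩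
    have hzval := congrArg Fin.val hz
    simp only at hzval
    rcases le_or_gt (z : ℕ) k with h | h
    · have h1 : f z ≤ f ⟨k, hk'⟩ := mono h
      simp only [Fin.le_def] at h1
      omega
    · have h1 : f ⟨k + 1, hk⟩ ≤ f z := mono (show (⟨k + 1, hk⟩ : Fin (m + 1)) ≤ z from h)
      simp only [Fin.le_def] at h1
      omega
  have uniq : ∀ (k : ℕ) (hk' : k < m + 1) (hk : k + 1 < m + 1),
      f ⟨k, hk'⟩ = f ⟨k + 1, hk⟩ → k = (a₀ : ℕ) ∧ k + 1 = (b₀ : ℕ) := by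
    intro k hk' hk heq
    rcases h2 _ _ heq with h | h
    · exfalso; have := congrArg Fin.val h; simp at this
    · rcases finset_pair_eq h with ⟨h1, h2'⟩ | ⟨h1, h2'⟩
      · exact ⟨by rw [← h1], by rw [← h2']⟩
      · exfalso
        have e1 := congrArg Fin.val h1
        have e2 := congrArg Fin.val h2'
        simp only at e1 e2
        omega
  have hb : (b₀ : ℕ) = (a₀ : ℕ) + 1 := by
    have hk : (a₀ : ℕ) + 1 < m + 1 := by have := b₀.isLt; omega
    have hk' : (a₀ : ℕ) < m + 1 := a₀.isLt
    have h1 : f a₀ ≤ f ⟨(a₀ : ℕ) + 1, hk⟩ := mono (by simp [Fin.le_def])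
    have h2' : f ⟨(a₀ : ℕ) + 1, hk⟩ ≤ f b₀ := mono (by simp [Fin.le_def]; omega)
    have heq : f ⟨(a₀ : ℕ), hk'⟩ = f ⟨(a₀ : ℕ) + 1, hk⟩ := by
      have ea : (⟨(a₀ : ℕ), hk'⟩ : Fin (m + 1)) = a₀ := rfl
      rw [ea]
      exact le_antisymm h1 (hfab ▸ h2')
    exact ((uniq _ hk' hk heq).2).symm
  refine ⟨hb, ?_⟩
  suffices h : ∀ k (hk : k < m + 1),
      (f ⟨k, hk⟩ : ℕ) = if k ≤ (a₀ : ℕ) then k else k - 1 by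
    intro x; simpa using h x x.isLt
  intro k
  induction k with
  | zero => intro hk; simpa using f0
  | succ k ih =>
    intro hk
    have hk' : k < m + 1 := by omega
    have ihk := ih hk'
    have hstep := step k hk' hk
    have hmono : (f ⟨k, hk'⟩ : ℕ) ≤ f ⟨k + 1, hk⟩ :=
      mono (show (⟨k, hk'⟩ : Fin (m + 1)) ≤ ⟨k + 1, hk⟩ from by simp [Fin.le_def])
    rcases lt_trichotomy k (a₀ : ℕ) with h | h | h
    · have hne : (f ⟨k, hk'⟩ : ℕ) ≠ (f ⟨k + 1, hk⟩ : ℕ) := by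
        intro he
        have := (uniq k hk' hk (Fin.ext he)).1
        omega
      rw [if_pos (by omega)]
      rw [if_pos (by omega)] at ihk
      omega
    · have heb : (⟨k + 1, hk⟩ : Fin (m + 1)) = b₀ := Fin.ext (by simp; omega)
      have hfb : f ⟨k + 1, hk⟩ = f a₀ := by rw [heb, ← hfab]
      have ea : (f a₀ : ℕ) = k := by
        have e2 : a₀ = ⟨k, hk'⟩ := Fin.ext (by simp; omega)
        rw [e2, ihk, if_pos (by omega)]
      rw [if_neg (by omega), hfb]
      omega
    · have hne : (f ⟨k, hk'⟩ : ℕ) ≠ (f ⟨k + 1, hk⟩ : ℕ) := by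
        intro he
        have := (uniq k hk' hk (Fin.ext he)).1
        omega
      rw [if_neg (by omega)]
      rw [if_neg (by omega)] at ihk
      omega

lemma strictMono_fin_le {n m : ℕ} {f : Fin n → Fin m} (hf : StrictMono f) :
    ∀ i : Fin n, (i : ℕ) ≤ (f i : ℕ) := by
  suffices h : ∀ k (hk : k < n), k ≤ (f ⟨k, hk⟩ : ℕ) by
    intro i; simpa using h i i.isLt
  intro k
  induction k with
  | zero => intro hk; simp
  | succ k ih =>
    intro hk
    have hk' : k < n := by omega
    have := ih hk'
    have h1 : (f ⟨k, hk'⟩ : ℕ) < f ⟨k + 1, hk⟩ := hf (by simp [Fin.lt_def])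
    omega

lemma strictMono_fin_id {n : ℕ} {f : Fin n → Fin n} (hf : StrictMono f) :
    ∀ i, f i = i := by
  have h2 : ∀ i : Fin n, (f i : ℕ) ≤ i := by
    have hrev : StrictMono (fun i : Fin n => (f i.rev).rev) := by
      intro a b hab
      simp only
      rw [Fin.rev_lt_rev]
      exact hf (by rwa [Fin.rev_lt_rev])
    intro i
    have := strictMono_fin_le hrev i.rev
    simp only [Fin.rev_rev] at this
    have h3 : (i.rev : ℕ) = n - 1 - i := by
      rcases i with ⟨i, hi⟩
      simp [Fin.rev]
      omega
    have h4 : ((f i).rev : ℕ) = n - 1 - (f i : ℕ) := by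
      simp [Fin.rev]
      omega
    have := (f i).isLt
    have := i.isLt
    omega
  intro i
  exact Fin.ext (le_antisymm (h2 i) (strictMono_fin_le hf i))

open Necklace in
/-- For a type (ii) morphism of necklaces `g` (a wedge of
identities with exactly one simplicial codegeneracy, i.e. a surjection collapsing
exactly one pair of consecutive vertices `v, v+1`, not both joints, and mapping
joints bijectively onto joints), with `N T = N T' + 1`, the induced map
`P₁(g) : {0,1}^{N} → {0,1}^{N-1}` is a cubical co-connection map precisely when
the collapsed vertex maps to a non-joint, and a cubical codegeneracy map
precisely when it maps to a joint. -/
theorem P1_of_typeII_is_connection_or_degeneracy {T T' : Necklace}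
    (g : Necklace.Hom T T') (v : Fin T.m)
    (hsurj : Function.Surjective g.f)
    (hJ : Finset.image g.f T.J = T'.J)
    (hJinj : Set.InjOn g.f (T.J : Set (Fin (T.m + 1))))
    (hcol : g.f v.castSucc = g.f v.succ)
    (hnotJ : ¬(v.castSucc ∈ T.J ∧ v.succ ∈ T.J))
    (hinj2 : ∀ a b, g.f a = g.f b → a = b ∨ ({a, b} : Finset _) = {v.castSucc, v.succ})
    (hN : T.N = T'.N + 1) :
    (g.f v.castSucc ∉ T'.J →
      ∃ j : Fin T'.N, ∀ (s : Fin (T'.N + 1) → Bool) (i : Fin T'.N),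
        Necklace.P1 g (fun t => s (Fin.cast hN t)) i = cubConn j s i) ∧
    (g.f v.castSucc ∈ T'.J →
      ∃ j : Fin (T'.N + 1), ∀ (s : Fin (T'.N + 1) → Bool) (i : Fin T'.N),
        Necklace.P1 g (fun t => s (Fin.cast hN t)) i = cubDegen j s i) := by
  classical
  have hmemNJ : ∀ (S : Necklace) (x : Fin (S.m + 1)), x ∈ S.nonJoints ↔ x ∉ S.J := by
    intro S x; simp [Necklace.nonJoints]
  have hfwd : ∀ x ∈ T.J, g.f x ∈ T'.J := by
    intro x hx; rw [← hJ]; exact Finset.mem_image_of_mem _ hx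
  have hpre : ∀ x, g.f x ∈ T'.J → x ∈ T.J ∨ x = v.castSucc ∨ x = v.succ := by
    intro x hx
    rw [← hJ, Finset.mem_image] at hx
    obtain ⟨a, ha, hfa⟩ := hx
    rcases hinj2 a x hfa with h | h
    · exact Or.inl (h ▸ ha)
    · right
      have hx2 : x ∈ ({v.castSucc, v.succ} : Finset _) := h ▸ (by simp)
      simpa using hx2
  have hEinj : ∀ k k' : Fin T.N,
      (T.enum k : Fin (T.m + 1)) = (T.enum k' : Fin (T.m + 1)) → k = k' :=
    fun k k' h => T.enum.injective (Subtype.ext h)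
  have hmemiff : ∀ (st : Fin T.N → Bool) (w : Fin (T'.m + 1)), w ∉ T'.J →
      ((w ∈ (T.subsetOf st).image g.f) ↔
        ∃ k : Fin T.N, st k = true ∧ g.f (T.enum k : Fin (T.m + 1)) = w) := by
    intro st w hw
    simp only [Necklace.subsetOf, Finset.mem_image, Finset.mem_union, Finset.mem_filter,
      Finset.mem_univ, true_and]
    constructor
    · rintro ⟨x, hx | ⟨k, hk, rfl⟩, hfx⟩
      · exact absurd (hfx ▸ hfwd x hx) hw
      · exact ⟨k, hk, hfx⟩
    · rintro ⟨k, hk, hfk⟩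
      exact ⟨_, Or.inr ⟨k, hk, rfl⟩, hfk⟩
  constructor
  · intro hc1
    have hnc : v.castSucc ∉ T.J := fun h => hc1 (hfwd _ h)
    have hns : v.succ ∉ T.J := fun h => hc1 (hcol ▸ hfwd _ h)
    have himgNJ : ∀ k : Fin T.N, g.f (T.enum k : Fin (T.m + 1)) ∈ T'.nonJoints := by
      intro k
      rw [hmemNJ]
      intro hmem
      rcases hpre _ hmem with h | h | h
      · exact ((hmemNJ _ _).mp (T.enum k).2) h
      · rw [h] at hmem; exact hc1 hmem
      · rw [h, ← hcol] at hmem; exact hc1 hmem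
    set ψ : Fin T.N → Fin T'.N :=
      fun k => T'.enum.symm ⟨g.f (T.enum k : Fin (T.m + 1)), himgNJ k⟩ with hψdef
    have hψval : ∀ k, (T'.enum (ψ k) : Fin (T'.m + 1)) = g.f (T.enum k : Fin (T.m + 1)) := by
      intro k; rw [hψdef]; simp
    have hψmono : Monotone ψ := by
      intro k k' hkk
      rw [hψdef]
      exact T'.enum.symm.monotone (Subtype.mk_le_mk.mpr (g.mono (T.enum.monotone hkk)))
    have hψsurj : Function.Surjective ψ := by
      intro i
      obtain ⟨x, hx⟩ := hsurj (T'.enum i : Fin (T'.m + 1))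
      have hxnj : x ∈ T.nonJoints := by
        rw [hmemNJ]
        intro hxJ
        exact ((hmemNJ _ _).mp (T'.enum i).2) (hx ▸ hfwd x hxJ)
      refine ⟨T.enum.symm ⟨x, hxnj⟩, T'.enum.injective (Subtype.ext ?_)⟩
      rw [hψval]
      simp only [OrderIso.apply_symm_apply]
      exact hx
    have hvcnj : v.castSucc ∈ T.nonJoints := (hmemNJ _ _).mpr hnc
    have hvsnj : v.succ ∈ T.nonJoints := (hmemNJ _ _).mpr hns
    set jc := T.enum.symm ⟨v.castSucc, hvcnj⟩ with hjcdef
    set js := T.enum.symm ⟨v.succ, hvsnj⟩ with hjsdef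
    have hEjc : (T.enum jc : Fin (T.m + 1)) = v.castSucc := by rw [hjcdef]; simp
    have hEjs : (T.enum js : Fin (T.m + 1)) = v.succ := by rw [hjsdef]; simp
    have hjcjs : (jc : ℕ) < (js : ℕ) := by
      have h1 : jc < js := by
        rw [hjcdef, hjsdef]
        exact T.enum.symm.strictMono (Subtype.mk_lt_mk.mpr (Fin.castSucc_lt_succ : v.castSucc < v.succ))
      exact h1
    have hψcol : ψ jc = ψ js := by
      rw [hψdef]
      refine congrArg _ (Subtype.ext ?_)
      show g.f (T.enum jc : Fin (T.m + 1)) = g.f (T.enum js : Fin (T.m + 1))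
      rw [hEjc, hEjs]
      exact hcol
    have hψfib : ∀ a b, ψ a = ψ b → a = b ∨ ({a, b} : Finset (Fin T.N)) = {jc, js} := by
      intro a b hab
      have h1 : g.f (T.enum a : Fin (T.m + 1)) = g.f (T.enum b : Fin (T.m + 1)) := by
        have h2 := congrArg (fun x => ((T'.enum x : _) : Fin (T'.m + 1))) hab
        simpa only [hψval] using h2
      rcases hinj2 _ _ h1 with h | h
      · exact Or.inl (hEinj _ _ h)
      · right
        rcases finset_pair_eq h with ⟨e1, e2⟩ | ⟨e1, e2⟩
        · rw [hEinj a jc (by rw [hEjc]; exact e1), hEinj b js (by rw [hEjs]; exact e2)]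
        · rw [hEinj a js (by rw [hEjs]; exact e1), hEinj b jc (by rw [hEjc]; exact e2)]
          exact Finset.pair_comm _ _
    have hcast : ∀ x : Fin (T'.N + 1), Fin.cast hN (Fin.cast hN.symm x) = x := fun x => rfl
    have hcast2 : ∀ x : Fin T.N, Fin.cast hN.symm (Fin.cast hN x) = x := fun x => rfl
    obtain ⟨hjs1, hform⟩ := collapse_formula (fun k : Fin (T'.N + 1) => ψ (Fin.cast hN.symm k))
      (fun a b hab => hψmono hab)
      (fun i => by
        obtain ⟨k, hk⟩ := hψsurj i
        exact ⟨Fin.cast hN k, hk⟩)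
      (Fin.cast hN jc) (Fin.cast hN js)
      (by simpa using hjcjs)
      hψcol
      (by
        intro a b hab
        rcases hψfib _ _ hab with h | h
        · exact Or.inl (Fin.ext (by simpa [Fin.ext_iff] using h))
        · right
          rcases finset_pair_eq h with ⟨e1, e2⟩ | ⟨e1, e2⟩
          · rw [show a = Fin.cast hN jc from Fin.ext (by simpa [Fin.ext_iff] using e1),
              show b = Fin.cast hN js from Fin.ext (by simpa [Fin.ext_iff] using e2)]
          · rw [show a = Fin.cast hN js from Fin.ext (by simpa [Fin.ext_iff] using e1),
              show b = Fin.cast hN jc from Fin.ext (by simpa [Fin.ext_iff] using e2)]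
            exact Finset.pair_comm _ _)
    simp only [Fin.coe_cast] at hjs1
    have hform' : ∀ k : Fin T.N,
        (ψ k : ℕ) = if (k : ℕ) ≤ (jc : ℕ) then (k : ℕ) else (k : ℕ) - 1 := by
      intro k
      simpa using hform (Fin.cast hN k)
    set j : Fin T'.N := ψ jc with hjdef
    have hjval : (j : ℕ) = (jc : ℕ) := by
      rw [hjdef, hform' jc, if_pos (le_refl _)]
    refine ⟨j, ?_⟩
    intro s i
    simp only [Necklace.P1]
    rw [decide_eq_decide.mpr (hmemiff _ _ ((hmemNJ _ _).mp (T'.enum i).2))]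
    have hcond : ∀ k : Fin T.N,
        g.f (T.enum k : Fin (T.m + 1)) = (T'.enum i : Fin (T'.m + 1)) ↔ ψ k = i := by
      intro k
      rw [← hψval k]
      exact ⟨fun h => T'.enum.injective (Subtype.ext h), fun h => by rw [h]⟩
    have hex : (∃ k : Fin T.N, s (Fin.cast hN k) = true ∧
        g.f (T.enum k : Fin (T.m + 1)) = (T'.enum i : Fin (T'.m + 1))) ↔
        (∃ k : Fin T.N, s (Fin.cast hN k) = true ∧ ψ k = i) := by
      constructor
      · rintro ⟨k, hk, h⟩; exact ⟨k, hk, (hcond k).mp h⟩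
      · rintro ⟨k, hk, h⟩; exact ⟨k, hk, (hcond k).mpr h⟩
    rw [decide_eq_decide.mpr hex]
    rcases lt_trichotomy (i : ℕ) (jc : ℕ) with h | h | h
    · have hiff2 : (∃ k : Fin T.N, s (Fin.cast hN k) = true ∧ ψ k = i) ↔
          s i.castSucc = true := by
        constructor
        · rintro ⟨k, hk, hki⟩
          have hv := hform' k
          have hiv : (ψ k : ℕ) = i := congrArg Fin.val hki
          by_cases hle : (k : ℕ) ≤ (jc : ℕ)
          · rw [if_pos hle] at hv
            have hck : Fin.cast hN k = i.castSucc := Fin.ext (by simp; omega)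
            rwa [hck] at hk
          · rw [if_neg hle] at hv; omega
        · intro hs
          refine ⟨Fin.cast hN.symm i.castSucc, hs, Fin.ext ?_⟩
          rw [hform' (Fin.cast hN.symm i.castSucc)]
          simp only [Fin.coe_cast, Fin.coe_castSucc]
          rw [if_pos (by omega)]
      rw [decide_eq_decide.mpr hiff2]
      rw [show cubConn j s i = s i.castSucc from by rw [cubConn, if_pos (by omega)]]
      exact Bool.decide_coe _
      exact Classical.dec _
    · have hiff2 : (∃ k : Fin T.N, s (Fin.cast hN k) = true ∧ ψ k = i) ↔
          (s i.castSucc || s i.succ) = true := by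
        rw [Bool.or_eq_true]
        constructor
        · rintro ⟨k, hk, hki⟩
          have hv := hform' k
          have hiv : (ψ k : ℕ) = i := congrArg Fin.val hki
          by_cases hle : (k : ℕ) ≤ (jc : ℕ)
          · rw [if_pos hle] at hv
            have hck : Fin.cast hN k = i.castSucc := Fin.ext (by simp; omega)
            rw [hck] at hk
            exact Or.inl hk
          · rw [if_neg hle] at hv
            have hck : Fin.cast hN k = i.succ := Fin.ext (by simp; omega)
            rw [hck] at hk
            exact Or.inr hk
        · rintro (hs | hs)
          · refine ⟨Fin.cast hN.symm i.castSucc, hs, Fin.ext ?_⟩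
            rw [hform' (Fin.cast hN.symm i.castSucc)]
            simp only [Fin.coe_cast, Fin.coe_castSucc]
            rw [if_pos (by omega)]
          · refine ⟨Fin.cast hN.symm i.succ, hs, Fin.ext ?_⟩
            rw [hform' (Fin.cast hN.symm i.succ)]
            simp only [Fin.coe_cast, Fin.val_succ]
            rw [if_neg (by omega)]
            omega
      rw [decide_eq_decide.mpr hiff2]
      rw [show cubConn j s i = (s i.castSucc || s i.succ) from by
        rw [cubConn, if_neg (by omega), if_pos (by omega)]]
      exact Bool.decide_coe _
    · have hiff2 : (∃ k : Fin T.N, s (Fin.cast hN k) = true ∧ ψ k = i) ↔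
          s i.succ = true := by
        constructor
        · rintro ⟨k, hk, hki⟩
          have hv := hform' k
          have hiv : (ψ k : ℕ) = i := congrArg Fin.val hki
          by_cases hle : (k : ℕ) ≤ (jc : ℕ)
          · rw [if_pos hle] at hv; omega
          · rw [if_neg hle] at hv
            have hck : Fin.cast hN k = i.succ := Fin.ext (by simp; omega)
            rwa [hck] at hk
        · intro hs
          refine ⟨Fin.cast hN.symm i.succ, hs, Fin.ext ?_⟩
          rw [hform' (Fin.cast hN.symm i.succ)]
          simp only [Fin.coe_cast, Fin.val_succ]
          rw [if_neg (by omega)]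
          omega
      rw [decide_eq_decide.mpr hiff2]
      rw [show cubConn j s i = s i.succ from by
        rw [cubConn, if_neg (by omega), if_neg (by omega)]]
      exact Bool.decide_coe _

    all_goals exact Classical.dec _
  · intro hc2
    have hone : v.castSucc ∈ T.J ∨ v.succ ∈ T.J := by
      rw [← hJ, Finset.mem_image] at hc2
      obtain ⟨a, ha, hfa⟩ := hc2
      rcases hinj2 a v.castSucc hfa with h | h
      · exact Or.inl (h ▸ ha)
      · have ha2 : a ∈ ({v.castSucc, v.succ} : Finset _) := h ▸ (by simp)
        simp only [Finset.mem_insert, Finset.mem_singleton] at ha2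
        rcases ha2 with h' | h'
        · exact Or.inl (h' ▸ ha)
        · exact Or.inr (h' ▸ ha)
    obtain ⟨u, t, hu, ht, hfu, hpairmem⟩ :
        ∃ u t : Fin (T.m + 1), u ∉ T.J ∧ t ∈ T.J ∧ g.f u = g.f v.castSucc ∧
          (∀ x : Fin (T.m + 1), x = v.castSucc ∨ x = v.succ ↔ x = u ∨ x = t) := by
      rcases hone with h | h
      · exact ⟨v.succ, v.castSucc, fun hs => hnotJ ⟨h, hs⟩, h, hcol.symm, fun x => by tauto⟩
      · exact ⟨v.castSucc, v.succ, fun hs => hnotJ ⟨hs, h⟩, h, rfl, fun x => by tauto⟩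
    have hunj : u ∈ T.nonJoints := (hmemNJ _ _).mpr hu
    have himgNJ2 : ∀ x, x ∉ T.J → x ≠ u → g.f x ∉ T'.J := by
      intro x hx hxu hmem
      rcases hpre _ hmem with h | h | h
      · exact hx h
      · rcases (hpairmem x).mp (Or.inl h) with h' | h'
        · exact hxu h'
        · exact hx (h' ▸ ht)
      · rcases (hpairmem x).mp (Or.inr h) with h' | h'
        · exact hxu h'
        · exact hx (h' ▸ ht)
    set ju := T.enum.symm ⟨u, hunj⟩ with hjudef
    have hEju : (T.enum ju : Fin (T.m + 1)) = u := by rw [hjudef]; simp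
    set j : Fin (T'.N + 1) := Fin.cast hN ju with hjdef
    set ρ : Fin T'.N → Fin T.N := fun i => Fin.cast hN.symm (j.succAbove i) with hρdef
    have hcast : ∀ x : Fin (T'.N + 1), Fin.cast hN (Fin.cast hN.symm x) = x := fun x => rfl
    have hρne : ∀ i, ρ i ≠ ju := by
      intro i he
      apply Fin.succAbove_ne j i
      apply Fin.ext
      simpa [hρdef, hjdef] using congrArg Fin.val he
    have hEρne : ∀ i, (T.enum (ρ i) : Fin (T.m + 1)) ≠ u := by
      intro i he
      exact hρne i (hEinj _ _ (he.trans hEju.symm))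
    have hEρnj : ∀ i : Fin T'.N, g.f (T.enum (ρ i) : Fin (T.m + 1)) ∈ T'.nonJoints := by
      intro i
      rw [hmemNJ]
      exact himgNJ2 _ ((hmemNJ _ _).mp (T.enum (ρ i)).2) (hEρne i)
    set ψ₂ : Fin T'.N → Fin T'.N :=
      fun i => T'.enum.symm ⟨g.f (T.enum (ρ i) : Fin (T.m + 1)), hEρnj i⟩ with hψ₂def
    have hψ₂val : ∀ i, (T'.enum (ψ₂ i) : Fin (T'.m + 1)) = g.f (T.enum (ρ i) : Fin (T.m + 1)) := by
      intro i; rw [hψ₂def]; simp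
    have hEmemPair : ∀ (a : Fin T.N),
        ({(T.enum a : Fin (T.m + 1))} : Set (Fin (T.m + 1))) = ∅ ∨ True := fun _ => Or.inr trivial
    have hnotpair : ∀ (a b : Fin T.N),
        ({(T.enum a : Fin (T.m + 1)), (T.enum b : Fin (T.m + 1))} : Finset (Fin (T.m + 1)))
          = {v.castSucc, v.succ} → (T.enum a : Fin (T.m + 1)) = u := by
      intro a b h
      have hmem1 : (T.enum a : Fin (T.m + 1)) ∈ ({v.castSucc, v.succ} : Finset _) :=
        h ▸ (by simp)
      simp only [Finset.mem_insert, Finset.mem_singleton] at hmem1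
      rcases (hpairmem _).mp hmem1 with h6 | h6
      · exact h6
      · exact absurd (h6 ▸ ht) ((hmemNJ _ _).mp (T.enum a).2)
    have hψ₂mono : StrictMono ψ₂ := by
      intro a b hab
      have h1 : ρ a < ρ b := by
        rw [hρdef]
        simp only [Fin.lt_def, Fin.coe_cast]
        exact Fin.strictMono_succAbove j hab
      have h2 : (T.enum (ρ a) : Fin (T.m + 1)) < (T.enum (ρ b) : Fin (T.m + 1)) :=
        T.enum.strictMono h1
      have h3 := g.mono h2.le
      rcases lt_or_eq_of_le h3 with h4 | h4
      · exact T'.enum.symm.strictMono (Subtype.mk_lt_mk.mpr h4)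
      · exfalso
        rcases hinj2 _ _ h4 with h5 | h5
        · exact absurd (hEinj _ _ h5) (ne_of_lt h1)
        · exact hEρne a (hnotpair _ _ h5)
    have hψ₂id := strictMono_fin_id hψ₂mono
    have hC2 : ∀ i, g.f (T.enum (ρ i) : Fin (T.m + 1)) = (T'.enum i : Fin (T'.m + 1)) := by
      intro i
      rw [← hψ₂val i, hψ₂id i]
    have huniq : ∀ (k : Fin T.N) (i : Fin T'.N),
        g.f (T.enum k : Fin (T.m + 1)) = (T'.enum i : Fin (T'.m + 1)) → k = ρ i := by
      intro k i hk
      have h1 : g.f (T.enum k : Fin (T.m + 1)) = g.f (T.enum (ρ i) : Fin (T.m + 1)) := by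
        rw [hk, hC2]
      rcases hinj2 _ _ h1 with h | h
      · exact hEinj _ _ h
      · exact absurd (hnotpair _ _ (by rwa [Finset.pair_comm] at h)) (hEρne i)
    refine ⟨j, ?_⟩
    intro s i
    simp only [Necklace.P1]
    rw [decide_eq_decide.mpr (hmemiff _ _ ((hmemNJ _ _).mp (T'.enum i).2))]
    have hiff : (∃ k : Fin T.N, s (Fin.cast hN k) = true ∧
        g.f (T.enum k : Fin (T.m + 1)) = (T'.enum i : Fin (T'.m + 1))) ↔
        s (j.succAbove i) = true := by
      constructor
      · rintro ⟨k, hk, hki⟩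
        rw [huniq k i hki] at hk
        rwa [hρdef, hcast] at hk
      · intro hs
        exact ⟨ρ i, by rw [hρdef, hcast]; exact hs, hC2 i⟩
    rw [decide_eq_decide.mpr hiff]
    simp only [cubDegen]
    exact Bool.decide_coe _
    exact Classical.dec _
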